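/- arXiv:1205.1930 — 4 statements merged into one kernel-verified Lean document; each statement's English description precedes it below -/
import Mathlib

section
/- Let (X, μ) be a standard non-atomic Borel probability space and let 𝓑 be a measure-dense system of Borel subsets of X. Let F₁, …, F_s ∈ 𝓑 be a partition of X into sets of positive measure and let ε > 0. Then there exist an integer p ≥ 1 and pairwise disjoint sets G₁, …, G_p ∈ 𝓑, each of positive measure and each contained in one of the sets F₁, …, F_s, such that for every measurable function T : X → ℂ with |T(x)| ≤ 1 for μ-almost every x, one has |∫_X T dμ − (1/p) Σ_{j=1}^p μ(G_j)^{-1} ∫_{G_j} T dμ| ≤ ε. -/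
open MeasureTheory Set
open scoped ENNReal

lemma cdf_cont (P : Measure ℝ) [IsProbabilityMeasure P] [NullSingletonClass P] :
    Continuous (ProbabilityTheory.cdf P) := by
  rw [continuous_iff_continuousAt]
  intro x
  have hm : Monotone (ProbabilityTheory.cdf P) := (ProbabilityTheory.monotone_cdf P)
  rw [hm.continuousAt_iff_leftLim_eq_rightLim, (ProbabilityTheory.cdf P).rightLim_eq]
  have h1 : (ProbabilityTheory.cdf P).measure {x} = 0 := by
    rw [ProbabilityTheory.measure_cdf]; exact measure_singleton x
  rw [StieltjesFunction.measure_singleton, ENNReal.ofReal_eq_zero] at h1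
  have h2 := hm.leftLim_le (le_refl x)
  linarith

lemma exists_subset_measure_eq' {X : Type} [MeasurableSpace X] [StandardBorelSpace X]
    (μ : Measure X) [IsFiniteMeasure μ] [NullSingletonClass μ] {A : Set X} (hA : MeasurableSet A)
    {r : ℝ≥0∞} (hr : r ≤ μ A) : ∃ B, B ⊆ A ∧ MeasurableSet B ∧ μ B = r := by
  rcases eq_or_lt_of_le hr with h | h
  · exact ⟨A, subset_rfl, hA, h.symm⟩
  rcases eq_or_ne r 0 with rfl | hr0
  · exact ⟨∅, empty_subset _, MeasurableSet.empty, measure_empty⟩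
  have hA0 : μ A ≠ 0 := fun h0 => by simp [h0] at h
  have hAtop : μ A ≠ ⊤ := measure_ne_top μ A
  obtain ⟨f, hf⟩ := exists_measurableEmbedding_real X
  set ρ := (μ.restrict A).map f with hρdef
  have hρ_apply : ∀ {t : Set ℝ}, MeasurableSet t → ρ t = μ (A ∩ f ⁻¹' t) := by
    intro t ht
    rw [hρdef, Measure.map_apply hf.measurable ht, Measure.restrict_apply' hA, Set.inter_comm]
  set P := (μ A)⁻¹ • ρ with hPdef
  have hP_apply : ∀ {t : Set ℝ}, MeasurableSet t → P t = (μ A)⁻¹ * μ (A ∩ f ⁻¹' t) := by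
    intro t ht
    rw [hPdef, Measure.smul_apply, smul_eq_mul, hρ_apply ht]
  haveI : IsProbabilityMeasure P := by
    constructor
    rw [hP_apply MeasurableSet.univ]
    simp only [Set.preimage_univ, Set.inter_univ]
    exact ENNReal.inv_mul_cancel hA0 hAtop
  haveI : NullSingletonClass P := by
    constructor
    intro x
    rw [hP_apply (measurableSet_singleton x)]
    have hsub : (f ⁻¹' {x}).Subsingleton := fun a ha b hb => hf.injective (by
      simp only [Set.mem_preimage, Set.mem_singleton_iff] at ha hb; rw [ha, hb])
    have : μ (A ∩ f ⁻¹' {x}) = 0 :=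
      measure_mono_null Set.inter_subset_right (hsub.measure_zero μ)
    simp [this]
  set g := ProbabilityTheory.cdf P with hgdef
  have hg : Continuous g := cdf_cont P
  have hdivlt : r / μ A < 1 := by
    rw [ENNReal.div_lt_iff (Or.inl hA0) (Or.inl hAtop), one_mul]; exact h
  set r' := (r / μ A).toReal with hr'def
  have hr'0 : 0 < r' := ENNReal.toReal_pos (by simp [ENNReal.div_eq_top, hr0, hAtop, hA0]) (hdivlt.trans_le le_top).ne
  have hr'1 : r' < 1 := by
    have := ENNReal.toReal_strict_mono (by simp) hdivlt
    simpa [hr'def, ENNReal.toReal_div] using this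
  obtain ⟨a, ha⟩ := ((ProbabilityTheory.tendsto_cdf_atBot P).eventually_lt_const hr'0).exists
  obtain ⟨b, hb⟩ := ((ProbabilityTheory.tendsto_cdf_atTop P).eventually_const_lt hr'1).exists
  have hab : a ≤ b := le_of_lt ((ProbabilityTheory.monotone_cdf P).reflect_lt (ha.trans hb))
  obtain ⟨c, -, hc⟩ := intermediate_value_Icc hab hg.continuousOn ⟨ha.le, hb.le⟩
  have hPc : P (Iic c) = r / μ A := by
    rw [← ProbabilityTheory.ofReal_cdf]
    show ENNReal.ofReal (g c) = r / μ A
    rw [hc, hr'def, ENNReal.ofReal_toReal (hdivlt.trans_le le_top).ne]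
  refine ⟨A ∩ f ⁻¹' (Iic c), Set.inter_subset_left,
    hA.inter (hf.measurable measurableSet_Iic), ?_⟩
  have heq : (μ A)⁻¹ * μ (A ∩ f ⁻¹' (Iic c)) = r / μ A := by
    rw [← hP_apply measurableSet_Iic, hPc]
  calc μ (A ∩ f ⁻¹' (Iic c)) = μ A * ((μ A)⁻¹ * μ (A ∩ f ⁻¹' (Iic c))) := by
        rw [← mul_assoc, ENNReal.mul_inv_cancel hA0 hAtop, one_mul]
    _ = μ A * (r / μ A) := by rw [heq]
    _ = r := by rw [mul_comm]; exact ENNReal.div_mul_cancel hA0 hAtop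


lemma abs_toReal_sub_le {X : Type} [MeasurableSpace X] (μ : Measure X) [IsFiniteMeasure μ]
    {A G D : Set X} (h1 : G \ A ⊆ D) (h2 : A \ G ⊆ D) :
    |(μ G).toReal - (μ A).toReal| ≤ (μ D).toReal := by
  have key : ∀ S T : Set X, S \ T ⊆ D → (μ S).toReal - (μ T).toReal ≤ (μ D).toReal := by
    intro S T hST
    have h : μ S ≤ μ T + μ D := by
      calc μ S ≤ μ (T ∪ D) := measure_mono (fun x hx => by
            by_cases hxT : x ∈ T
            · exact Or.inl hxT
            · exact Or.inr (hST ⟨hx, hxT⟩))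
        _ ≤ μ T + μ D := measure_union_le T D
    have h' := ENNReal.toReal_mono (by finiteness) h
    rw [ENNReal.toReal_add (measure_ne_top μ T) (measure_ne_top μ D)] at h'
    linarith
  rw [abs_sub_le_iff]
  exact ⟨key G A h1, key A G h2⟩

lemma listB {X : Type} [MeasurableSpace X] [StandardBorelSpace X]
    (μ : Measure X) [IsProbabilityMeasure μ] [NullSingletonClass μ]
    (𝓑 : Set (Set X))
    (hmeas : ∀ B ∈ 𝓑, MeasurableSet B)
    (hcompl : ∀ B ∈ 𝓑, Bᶜ ∈ 𝓑)
    (hinter : ∀ B ∈ 𝓑, ∀ C ∈ 𝓑, B ∩ C ∈ 𝓑)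
    (hdense : ∀ A : Set X, MeasurableSet A → ∀ ε : ℝ, 0 < ε →
      ∃ B ∈ 𝓑, (μ (symmDiff A B)).toReal < ε)
    {τ δ : ℝ} (hτ : 0 < τ) (hδ : 0 < δ) :
    ∀ (k : ℕ) (S : Set X), S ∈ 𝓑 → (k : ℝ) * (τ + δ) ≤ (μ S).toReal →
      ∃ L : List (Set X), L.length = k ∧ L.Pairwise Disjoint ∧
        ∀ G ∈ L, G ∈ 𝓑 ∧ G ⊆ S ∧ |(μ G).toReal - τ| ≤ δ := by
  intro k
  induction k with
  | zero => exact fun S _ _ => ⟨[], rfl, List.Pairwise.nil, by simp⟩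
  | succ k ih =>
    intro S hS hlen
    have hSm := hmeas S hS
    push_cast at hlen
    have hk0 : (0:ℝ) ≤ (k:ℝ) := Nat.cast_nonneg k
    have hτS : ENNReal.ofReal τ ≤ μ S := by
      rw [ENNReal.ofReal_le_iff_le_toReal (measure_ne_top μ S)]
      nlinarith
    obtain ⟨A, hAS, hAm, hAμ⟩ := exists_subset_measure_eq' μ hSm hτS
    have hAt : (μ A).toReal = τ := by rw [hAμ]; exact ENNReal.toReal_ofReal hτ.le
    obtain ⟨B, hB𝓑, hAB⟩ := hdense A hAm δ hδ
    set G := B ∩ S with hGdef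
    have hG𝓑 : G ∈ 𝓑 := hinter B hB𝓑 S hS
    have hGS : G ⊆ S := Set.inter_subset_right
    have hGm : MeasurableSet G := hmeas G hG𝓑
    have hclose : |(μ G).toReal - τ| ≤ δ := by
      rw [← hAt]
      refine le_trans (abs_toReal_sub_le μ (D := symmDiff A B) ?_ ?_) hAB.le
      · intro x hx
        rw [Set.mem_symmDiff]
        exact Or.inr ⟨hx.1.1, hx.2⟩
      · intro x hx
        rw [Set.mem_symmDiff]
        exact Or.inl ⟨hx.1, fun hxB => hx.2 ⟨hxB, hAS hx.1⟩⟩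
    set S' := S ∩ Gᶜ with hS'def
    have hS'𝓑 : S' ∈ 𝓑 := hinter S hS Gᶜ (hcompl G hG𝓑)
    have hS'eq : (μ S').toReal = (μ S).toReal - (μ G).toReal := by
      have hd : μ S' = μ S - μ G := by
        rw [hS'def, ← Set.diff_eq]
        exact measure_diff hGS hGm.nullMeasurableSet (measure_ne_top μ G)
      rw [hd, ENNReal.toReal_sub_of_le (measure_mono hGS) (measure_ne_top μ S)]
    have hGub : (μ G).toReal ≤ τ + δ := by
      have := abs_le.1 hclose
      linarith [this.2]
    have hlen' : (k : ℝ) * (τ + δ) ≤ (μ S').toReal := by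
      rw [hS'eq]; nlinarith
    obtain ⟨L, hL1, hL2, hL3⟩ := ih S' hS'𝓑 hlen'
    refine ⟨G :: L, by simp [hL1], ?_, ?_⟩
    · refine List.Pairwise.cons ?_ hL2
      intro G' hG'
      have hsub : G' ⊆ S' := (hL3 G' hG').2.1
      exact Set.disjoint_left.2 fun x hxG hxG' => (hsub hxG').2 hxG
    · intro G' hG'
      rcases List.mem_cons.1 hG' with rfl | h
      · exact ⟨hG𝓑, hGS, hclose⟩
      · obtain ⟨h1, h2, h3⟩ := hL3 G' h
        exact ⟨h1, h2.trans Set.inter_subset_left, h3⟩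


lemma estimate {X : Type} [MeasurableSpace X] (μ : Measure X) [IsProbabilityMeasure μ]
    (P : ℕ) (hP : P ≠ 0) (G : Fin P → Set X) (hGm : ∀ j, MeasurableSet (G j))
    (hdisj : Pairwise (Function.onFun Disjoint G))
    (hpos : ∀ j, 0 < (μ (G j)).toReal)
    (T : X → ℂ) (hT : Measurable T) (hT1 : ∀ᵐ x ∂μ, ‖T x‖ ≤ 1) :
    ‖(∫ x, T x ∂μ) - (P : ℂ)⁻¹ * ∑ j : Fin P, ((μ (G j)).toReal : ℂ)⁻¹ * ∫ x in G j, T x ∂μ‖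
      ≤ (1 - ∑ j : Fin P, (μ (G j)).toReal) + ∑ j : Fin P, |(μ (G j)).toReal - (P : ℝ)⁻¹| := by
  have hint : Integrable T μ :=
    Integrable.mono' (integrable_const (1:ℝ)) hT.aestronglyMeasurable hT1
  set c : Fin P → ℝ := fun j => (μ (G j)).toReal with hc
  set I : Fin P → ℂ := fun j => ∫ x in G j, T x ∂μ with hI
  have hU : MeasurableSet (⋃ j, G j) := MeasurableSet.iUnion hGm
  have hsplit : ∫ x, T x ∂μ = (∑ j, I j) + ∫ x in (⋃ j, G j)ᶜ, T x ∂μ := by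
    rw [← integral_add_compl hU hint,
      integral_iUnion_fintype hGm hdisj (fun j => hint.integrableOn)]
  have hIle : ∀ j, ‖I j‖ ≤ c j := by
    intro j
    have := norm_setIntegral_le_of_norm_le_const_ae' (measure_lt_top μ (G j))
      (C := 1) (hT1.mono fun x hx _ => hx)
    simpa [measureReal_def] using this
  have hcompl_le : ‖∫ x in (⋃ j, G j)ᶜ, T x ∂μ‖ ≤ 1 - ∑ j, c j := by
    have h1 := norm_setIntegral_le_of_norm_le_const_ae' (measure_lt_top μ (⋃ j, G j)ᶜ)
      (C := 1) (hT1.mono fun x hx _ => hx)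
    have h3 : μ (⋃ j, G j) = ∑ j, μ (G j) := by
      rw [measure_iUnion hdisj (fun j => hGm j), tsum_fintype]
    have h2 : (μ ((⋃ j, G j)ᶜ)).toReal = 1 - ∑ j, c j := by
      rw [measure_compl hU (measure_ne_top _ _), measure_univ, h3,
        ENNReal.toReal_sub_of_le (h3 ▸ prob_le_one) ENNReal.one_ne_top, ENNReal.toReal_one,
        ENNReal.toReal_sum (fun j _ => measure_ne_top μ _)]
    rw [measureReal_def, h2] at h1
    simpa using h1
  have key : (∫ x, T x ∂μ) - (P : ℂ)⁻¹ * ∑ j, ((c j : ℝ) : ℂ)⁻¹ * I j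
      = (∫ x in (⋃ j, G j)ᶜ, T x ∂μ) + ∑ j, (1 - (P:ℂ)⁻¹ * ((c j : ℝ) : ℂ)⁻¹) * I j := by
    rw [hsplit, Finset.mul_sum]
    rw [add_comm (∑ j, I j), add_sub_assoc, ← Finset.sum_sub_distrib]
    congr 1
    exact Finset.sum_congr rfl fun j _ => by ring
  rw [key]
  refine le_trans (norm_add_le _ _) (add_le_add hcompl_le ?_)
  refine le_trans (norm_sum_le _ _) (Finset.sum_le_sum fun j _ => ?_)
  have hcj : c j ≠ 0 := (hpos j).ne'
  have hcast : (1 - (P:ℂ)⁻¹ * ((c j : ℝ) : ℂ)⁻¹) = ((1 - (P:ℝ)⁻¹ * (c j)⁻¹ : ℝ) : ℂ) := by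
    push_cast; ring
  rw [norm_mul, hcast, Complex.norm_real, Real.norm_eq_abs]
  calc |1 - (P:ℝ)⁻¹ * (c j)⁻¹| * ‖I j‖ ≤ |1 - (P:ℝ)⁻¹ * (c j)⁻¹| * c j :=
        mul_le_mul_of_nonneg_left (hIle j) (abs_nonneg _)
    _ = |(1 - (P:ℝ)⁻¹ * (c j)⁻¹) * c j| := by
        rw [abs_mul, abs_of_nonneg (hpos j).le]
    _ = |c j - (P:ℝ)⁻¹| := by
        congr 1
        field_simp
lemma sum_get_list {α β : Type*} [AddCommMonoid β] (l : List α) (f : α → β) :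
    ∑ j : Fin l.length, f (l.get j) = (l.map f).sum := by
  conv_rhs => rw [← List.ofFn_get l]
  rw [List.map_ofFn, List.sum_ofFn]
  rfl

/-- The strong Følner condition for the algebra generated by a measure-dense
system of Borel sets: given a finite partition `F₁, …, F_s ∈ 𝓑` of `X` into sets of positive
measure and `ε > 0`, there are finitely many pairwise disjoint positive-measure sets
`G₁, …, G_p ∈ 𝓑`, each contained in some `F_i`, such that the normalized average of the
normalized integrals over the `G_j` approximates the integral against `μ` up to `ε`,
uniformly over all measurable `T : X → ℂ` bounded a.e. by `1`. -/
theorem strong_foelner_condition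
    {X : Type} [MeasurableSpace X] [StandardBorelSpace X]
    (μ : Measure X) [IsProbabilityMeasure μ] [NullSingletonClass μ]
    (𝓑 : Set (Set X))
    (hmeas : ∀ B ∈ 𝓑, MeasurableSet B)
    (hcompl : ∀ B ∈ 𝓑, Bᶜ ∈ 𝓑)
    (hinter : ∀ B ∈ 𝓑, ∀ C ∈ 𝓑, B ∩ C ∈ 𝓑)
    (hdense : ∀ A : Set X, MeasurableSet A → ∀ ε : ℝ, 0 < ε →
      ∃ B ∈ 𝓑, (μ (symmDiff A B)).toReal < ε)
    (s : ℕ) (F : Fin s → Set X) (hF : ∀ i, F i ∈ 𝓑)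
    (hFdisj : Pairwise (Function.onFun Disjoint F))
    (hFcover : (⋃ i, F i) = Set.univ)
    (hFpos : ∀ i, 0 < μ (F i))
    (ε : ℝ) (hε : 0 < ε) :
    ∃ (p : ℕ), 1 ≤ p ∧ ∃ G : Fin p → Set X,
      (∀ j, G j ∈ 𝓑) ∧
      Pairwise (Function.onFun Disjoint G) ∧
      (∀ j, 0 < μ (G j)) ∧
      (∀ j, ∃ i, G j ⊆ F i) ∧
      ∀ T : X → ℂ, Measurable T → (∀ᵐ x ∂μ, ‖T x‖ ≤ 1) →
        ‖(∫ x, T x ∂μ) -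
            (p : ℂ)⁻¹ * ∑ j : Fin p, ((μ (G j)).toReal : ℂ)⁻¹ * ∫ x in G j, T x ∂μ‖ ≤ ε := by
  classical
  rcases Nat.eq_zero_or_pos s with rfl | hs
  · exfalso
    have h0 : (Set.univ : Set X) = (∅ : Set X) := by
      rw [← hFcover]; exact Set.iUnion_of_empty F
    have h1 := measure_univ (μ := μ)
    rw [h0, measure_empty] at h1
    exact one_ne_zero h1.symm
  haveI : Nonempty (Fin s) := ⟨⟨0, hs⟩⟩
  set m : ℝ := Finset.univ.inf' Finset.univ_nonempty (fun i => (μ (F i)).toReal) with hmdef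
  have hm0 : 0 < m := by
    rw [hmdef, Finset.lt_inf'_iff]
    exact fun i _ => ENNReal.toReal_pos (hFpos i).ne' (measure_ne_top μ _)
  have hmle : ∀ i, m ≤ (μ (F i)).toReal := fun i => Finset.inf'_le _ (Finset.mem_univ i)
  set N : ℕ := max 1 (max (⌈4 * (s:ℝ) / ε⌉₊) (max (⌈2 / m⌉₊) s)) with hNdef
  have hN1 : 1 ≤ N := le_max_left _ _
  have hN0 : (0:ℝ) < N := by exact_mod_cast Nat.lt_of_lt_of_le Nat.zero_lt_one hN1
  have hNs : (s:ℝ) ≤ N := by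
    have : s ≤ N := le_trans (le_max_right _ _) (le_trans (le_max_right _ _) (le_max_right _ _))
    exact_mod_cast this
  have hN4 : 4 * (s:ℝ) / ε ≤ N := by
    refine le_trans (Nat.le_ceil _) ?_
    have : ⌈4 * (s:ℝ) / ε⌉₊ ≤ N := le_trans (le_max_left _ _) (le_max_right _ _)
    exact_mod_cast this
  have hNm : 2 / m ≤ (N:ℝ) := by
    refine le_trans (Nat.le_ceil _) ?_
    have : ⌈2 / m⌉₊ ≤ N :=
      le_trans (le_max_left _ _) (le_trans (le_max_right _ _) (le_max_right _ _))
    exact_mod_cast this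
  have hsN : (s:ℝ) / N ≤ ε / 4 := by
    rw [div_le_div_iff₀ hN0 (by norm_num : (0:ℝ) < 4)]
    have h4 := (div_le_iff₀ hε).1 hN4
    linarith
  have hinvN : 1 / (N:ℝ) ≤ m / 2 := by
    rw [div_le_div_iff₀ hN0 (by norm_num : (0:ℝ) < 2)]
    have h2 := (div_le_iff₀ hm0).1 hNm
    linarith
  set δ : ℝ := min (ε / (16 * N)) (min (m / 2) (1 / (2 * N))) with hδdef
  have hδ0 : 0 < δ :=
    lt_min (by positivity) (lt_min (by positivity) (by positivity))
  have hδε : δ ≤ ε / (16 * N) := min_le_left _ _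
  have hδm : δ ≤ m / 2 := le_trans (min_le_right _ _) (min_le_left _ _)
  have hδN : δ ≤ 1 / (2 * N) := le_trans (min_le_right _ _) (min_le_right _ _)
  set β : ℝ := 1 / N with hβdef
  have hβ0 : 0 < β := by positivity
  set q : ℝ := β + δ with hq
  have hq0 : 0 < q := by positivity
  have hqm : q ≤ m := by rw [hq]; linarith [hinvN, hδm]
  set a : Fin s → ℕ := fun i => ⌊(μ (F i)).toReal / q⌋₊ with hadef
  have ha_le : ∀ i, (a i : ℝ) * q ≤ (μ (F i)).toReal := by
    intro i
    have h := Nat.floor_le (by positivity : (0:ℝ) ≤ (μ (F i)).toReal / q)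
    calc (a i : ℝ) * q ≤ ((μ (F i)).toReal / q) * q :=
          mul_le_mul_of_nonneg_right h hq0.le
      _ = (μ (F i)).toReal := div_mul_cancel₀ _ hq0.ne'
  have ha_gt : ∀ i, (μ (F i)).toReal ≤ ((a i : ℝ) + 1) * q := by
    intro i
    have h := (Nat.lt_floor_add_one ((μ (F i)).toReal / q)).le
    calc (μ (F i)).toReal = ((μ (F i)).toReal / q) * q :=
          (div_mul_cancel₀ _ hq0.ne').symm
      _ ≤ ((a i:ℝ)+1) * q := by
          refine mul_le_mul_of_nonneg_right ?_ hq0.le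
          exact_mod_cast h
  have ha1 : ∀ i, 1 ≤ a i := by
    intro i
    refine Nat.le_floor ?_
    rw [Nat.cast_one, le_div_iff₀ hq0, one_mul]
    exact hqm.trans (hmle i)
  have hx : ∀ i, ∃ L : List (Set X), L.length = a i ∧ L.Pairwise Disjoint ∧
      ∀ G ∈ L, G ∈ 𝓑 ∧ G ⊆ F i ∧ |(μ G).toReal - β| ≤ δ := by
    intro i
    refine listB μ 𝓑 hmeas hcompl hinter hdense hβ0 hδ0 (a i) (F i) (hF i) ?_
    rw [← hq]; exact ha_le i
  choose L hLlen hLpw hLmem using hx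
  set Lb : List (Set X) := (List.ofFn L).flatten with hLbdef
  have hPsum : Lb.length = ∑ i, a i := by
    rw [hLbdef, List.length_flatten, List.map_ofFn, List.sum_ofFn]
    exact Finset.sum_congr rfl fun i _ => hLlen i
  have hP1 : 1 ≤ Lb.length := by
    rw [hPsum]
    calc 1 ≤ a ⟨0, hs⟩ := ha1 _
      _ ≤ ∑ i, a i := Finset.single_le_sum (fun i _ => Nat.zero_le _) (Finset.mem_univ _)
  have hP0 : (0:ℝ) < Lb.length := by exact_mod_cast hP1
  have hmem : ∀ Gj ∈ Lb, Gj ∈ 𝓑 ∧ (∃ i, Gj ⊆ F i) ∧ |(μ Gj).toReal - β| ≤ δ := by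
    intro Gj hGj
    rw [hLbdef, List.mem_flatten] at hGj
    obtain ⟨l, hl, hGl⟩ := hGj
    rw [List.mem_ofFn] at hl
    obtain ⟨i, rfl⟩ := hl
    obtain ⟨h1, h2, h3⟩ := hLmem i Gj hGl
    exact ⟨h1, ⟨i, h2⟩, h3⟩
  have hpwb : Lb.Pairwise Disjoint := by
    rw [hLbdef, List.pairwise_flatten]
    constructor
    · intro l hl
      rw [List.mem_ofFn] at hl
      obtain ⟨i, rfl⟩ := hl
      exact hLpw i
    · rw [List.pairwise_ofFn]
      intro i j hij x hx y hy
      exact Set.disjoint_of_subset (hLmem i x hx).2.1 (hLmem j y hy).2.1 (hFdisj hij.ne)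
  have hmemget : ∀ j : Fin Lb.length, Lb.get j ∈ Lb := fun j => by
    simpa using List.get_mem Lb j.1 j.2
  have hlow : ∀ j : Fin Lb.length, β - δ ≤ (μ (Lb.get j)).toReal := by
    intro j
    have := abs_le.1 (hmem _ (hmemget j)).2.2
    linarith [this.1]
  have hposR : ∀ j : Fin Lb.length, 0 < (μ (Lb.get j)).toReal := by
    intro j
    have hhalf : 1 / (2*(N:ℝ)) = β / 2 := by
      rw [hβdef, mul_comm, ← div_div]
    have h2 : (0:ℝ) < β / 2 := by positivity
    have h3 : δ ≤ β / 2 := hhalf ▸ hδN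
    linarith [hlow j]
  refine ⟨Lb.length, hP1, fun j => Lb.get j, ?_, ?_, ?_, ?_, ?_⟩
  · exact fun j => (hmem _ (hmemget j)).1
  · intro j k hjk
    rcases lt_or_gt_of_ne hjk with h | h
    · exact List.pairwise_iff_get.1 hpwb j k h
    · exact (List.pairwise_iff_get.1 hpwb k j h).symm
  · intro j
    have := hposR j
    exact (ENNReal.toReal_pos_iff.1 this).1
  · exact fun j => (hmem _ (hmemget j)).2.1
  · intro T hTm hT1
    refine le_trans (estimate μ Lb.length (by omega) _
      (fun j => hmeas _ (hmem _ (hmemget j)).1) ?_ hposR T hTm hT1) ?_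
    · intro j k hjk
      rcases lt_or_gt_of_ne hjk with h | h
      · exact List.pairwise_iff_get.1 hpwb j k h
      · exact (List.pairwise_iff_get.1 hpwb k j h).symm
    -- numeric estimate
    show (1 - ∑ j : Fin Lb.length, (μ (Lb.get j)).toReal)
        + ∑ j : Fin Lb.length, |(μ (Lb.get j)).toReal - ((Lb.length : ℕ) : ℝ)⁻¹| ≤ ε
    have hsum1 : ∑ i, (μ (F i)).toReal = 1 := by
      have h3 : μ Set.univ = ∑ i, μ (F i) := by
        rw [← hFcover, measure_iUnion hFdisj (fun i => hmeas _ (hF i)), tsum_fintype]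
      rw [← ENNReal.toReal_sum (fun i _ => measure_ne_top μ _), ← h3, measure_univ,
        ENNReal.toReal_one]
    have hcast : ((Lb.length : ℕ) : ℝ) = ∑ i, (a i : ℝ) := by
      rw [hPsum]; push_cast; rfl
    have hPle : ((Lb.length : ℕ) : ℝ) * q ≤ 1 := by
      rw [hcast, Finset.sum_mul]
      exact le_trans (Finset.sum_le_sum fun i _ => ha_le i) hsum1.le
    have hqN : 1 ≤ q * N := by
      have hβN : β * N = 1 := by rw [hβdef]; field_simp
      rw [hq]; nlinarith [mul_nonneg hδ0.le hN0.le]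
    have hPN : ((Lb.length : ℕ) : ℝ) ≤ (N:ℝ) := by
      calc ((Lb.length : ℕ) : ℝ) ≤ (Lb.length : ℝ) * (q * N) :=
            le_mul_of_one_le_right (by positivity) hqN
        _ = (Lb.length : ℝ) * q * N := (mul_assoc _ _ _).symm
        _ ≤ 1 * N := mul_le_mul_of_nonneg_right hPle hN0.le
        _ = N := one_mul _
    have hgt : (1:ℝ) ≤ ((Lb.length : ℝ) + s) * (β + δ) := by
      have hc2 : ∑ i, ((a i : ℝ) + 1) = (Lb.length : ℝ) + s := by
        rw [Finset.sum_add_distrib, Finset.sum_const, Finset.card_univ, Fintype.card_fin,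
          hcast]
        push_cast; ring
      calc (1:ℝ) = ∑ i, (μ (F i)).toReal := hsum1.symm
        _ ≤ ∑ i, ((a i : ℝ) + 1) * q := Finset.sum_le_sum fun i _ => ha_gt i
        _ = (∑ i, ((a i : ℝ) + 1)) * q := (Finset.sum_mul _ _ _).symm
        _ = ((Lb.length : ℝ) + s) * (β + δ) := by rw [hc2, ← hq]
    have hA4 : (Lb.length : ℝ) * δ ≤ (N:ℝ) * δ := mul_le_mul_of_nonneg_right hPN hδ0.le
    have hsδ : (s:ℝ) * δ ≤ (N:ℝ) * δ := mul_le_mul_of_nonneg_right hNs hδ0.le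
    have hA3 : 1 - (Lb.length : ℝ) * β ≤ (s:ℝ) * β + 2 * (N:ℝ) * δ := by nlinarith
    have hA5 : (s:ℝ) * β ≤ ε / 4 := by
      have h : (s:ℝ) * β = s / N := by rw [hβdef]; ring
      rw [h]; exact hsN
    have hA6 : (N:ℝ) * δ ≤ ε / 16 := by
      have h := mul_le_mul_of_nonneg_left hδε hN0.le
      have h2 : (N:ℝ) * (ε / (16 * N)) = ε / 16 := by field_simp
      linarith [h2 ▸ h]
    have hScge : (Lb.length : ℝ) * β - (Lb.length : ℝ) * δ
        ≤ ∑ j : Fin Lb.length, (μ (Lb.get j)).toReal := by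
      have h : ∑ _j : Fin Lb.length, (β - δ) ≤ ∑ j : Fin Lb.length, (μ (Lb.get j)).toReal :=
        Finset.sum_le_sum (fun j _ => hlow j)
      rw [Finset.sum_const, Finset.card_univ, Fintype.card_fin, nsmul_eq_mul, mul_sub] at h
      exact h
    have hβP : β ≤ ((Lb.length : ℕ) : ℝ)⁻¹ := by
      rw [hβdef, inv_eq_one_div]
      exact one_div_le_one_div_of_le hP0 hPN
    have hsumabs : ∑ j : Fin Lb.length, |(μ (Lb.get j)).toReal - ((Lb.length : ℕ) : ℝ)⁻¹|
        ≤ (Lb.length : ℝ) * δ + (1 - (Lb.length : ℝ) * β) := by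
      have habs : ∀ j : Fin Lb.length,
          |(μ (Lb.get j)).toReal - ((Lb.length : ℕ) : ℝ)⁻¹|
            ≤ δ + (((Lb.length : ℕ) : ℝ)⁻¹ - β) := by
        intro j
        calc |(μ (Lb.get j)).toReal - ((Lb.length : ℕ) : ℝ)⁻¹|
            ≤ |(μ (Lb.get j)).toReal - β| + |β - ((Lb.length : ℕ) : ℝ)⁻¹| :=
              abs_sub_le _ _ _
          _ ≤ δ + (((Lb.length : ℕ) : ℝ)⁻¹ - β) := by
              refine add_le_add (hmem _ (hmemget j)).2.2 ?_
              rw [abs_sub_comm, abs_of_nonneg (sub_nonneg.2 hβP)]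
      calc ∑ j : Fin Lb.length, |(μ (Lb.get j)).toReal - ((Lb.length : ℕ) : ℝ)⁻¹|
          ≤ ∑ _j : Fin Lb.length, (δ + (((Lb.length : ℕ) : ℝ)⁻¹ - β)) :=
            Finset.sum_le_sum fun j _ => habs j
        _ = (Lb.length : ℝ) * (δ + (((Lb.length : ℕ) : ℝ)⁻¹ - β)) := by
            rw [Finset.sum_const, Finset.card_univ, Fintype.card_fin, nsmul_eq_mul]
        _ = (Lb.length : ℝ) * δ
            + ((Lb.length : ℝ) * ((Lb.length : ℕ) : ℝ)⁻¹ - (Lb.length : ℝ) * β) := by ring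
        _ = (Lb.length : ℝ) * δ + (1 - (Lb.length : ℝ) * β) := by
            rw [mul_inv_cancel₀ hP0.ne']
    linarith
end

section
/- Let (X, μ) be a standard non-atomic Borel probability space and let 𝓑 be a measure-dense system of Borel subsets of X. Let F₁, …, F_s ∈ 𝓑 be a partition of X into sets of positive measure and let δ ∈ (0, 1]. Then there exist an integer q ≥ 1, non-negative integers p₁, …, p_s with 0 ≤ μ(F_i) − p_i/q < δ/(2s) for every i, and, setting p = p₁ + ⋯ + p_s (so that p ≥ 1 and 1 − p/q ≤ δ/2), for each i pairwise disjoint sets G_{i,1}, …, G_{i,p_i} ∈ 𝓑 contained in F_i, such that |μ(G_{i,j}) − 1/q| ≤ δ/(2 s p q) for all i, j, and μ(F_i \ (G_{i,1} ∪ ⋯ ∪ G_{i,p_i})) ≤ δ/s for every i. In particular, the sets G_{i,j} are pairwise disjoint, each has measure within δ/(2spq) of 1/q, and their union covers X up to a set of measure at most δ. -/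
open MeasureTheory
open Set
open scoped ENNReal symmDiff

lemma sierpinski_subset {X : Type} [MeasurableSpace X] [StandardBorelSpace X]
    (μ : Measure X) [IsFiniteMeasure μ] [NullSingletonClass μ] {F : Set X} (hF : MeasurableSet F)
    {r : ℝ≥0∞} (hr : r ≤ μ F) :
    ∃ A, A ⊆ F ∧ MeasurableSet A ∧ μ A = r := by
  obtain ⟨f, hf⟩ := exists_measurableEmbedding_real X
  rcases eq_or_lt_of_le hr with hEq | hlt
  · exact ⟨F, Subset.rfl, hF, hEq.symm⟩
  rcases eq_or_ne r 0 with rfl | hr0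
  · exact ⟨∅, empty_subset _, MeasurableSet.empty, measure_empty⟩
  set m : ℝ → ℝ≥0∞ := fun c => μ (F ∩ f ⁻¹' Iic c) with hm
  have hmeas : ∀ c, MeasurableSet (F ∩ f ⁻¹' Iic c) :=
    fun c => hF.inter (hf.measurable measurableSet_Iic)
  have hmono : Monotone m := fun a b hab =>
    measure_mono (inter_subset_inter_right _ (preimage_mono (Iic_subset_Iic.2 hab)))
  -- nonempty: ∃ c, r < m c
  have hne : ∃ c : ℝ, r ≤ m c := by
    have hU : (⋃ n : ℕ, F ∩ f ⁻¹' Iic (n : ℝ)) = F := by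
      rw [← inter_iUnion, ← preimage_iUnion]
      have : (⋃ n : ℕ, Iic ((n : ℝ))) = univ := by
        ext x; simp only [mem_iUnion, mem_Iic, mem_univ, iff_true]
        exact exists_nat_ge x
      rw [this]; simp
    have hmonoN : Monotone fun n : ℕ => F ∩ f ⁻¹' Iic (n : ℝ) := fun a b hab =>
      inter_subset_inter_right _ (preimage_mono (Iic_subset_Iic.2 (by exact_mod_cast hab)))
    have := hmonoN.measure_iUnion (μ := μ)
    rw [hU] at this
    rw [this] at hlt
    obtain ⟨n, hn⟩ := lt_iSup_iff.1 hlt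
    exact ⟨n, hn.le⟩
  obtain ⟨cU, hcU⟩ := hne
  -- bounded below
  have hbdd : ∃ n : ℕ, m (-(n : ℝ)) < r := by
    have hI : (⋂ n : ℕ, F ∩ f ⁻¹' Iic (-(n : ℝ))) = ∅ := by
      rw [← inter_iInter, ← preimage_iInter]
      have : (⋂ n : ℕ, Iic (-(n : ℝ))) = ∅ := by
        ext x; simp only [mem_iInter, mem_Iic, mem_empty_iff_false, iff_false, not_forall, not_le]
        obtain ⟨n, hn⟩ := exists_nat_gt (-x)
        exact ⟨n, by linarith⟩
      rw [this]; simp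
    have hanti : Antitone fun n : ℕ => F ∩ f ⁻¹' Iic (-(n : ℝ)) := fun a b hab =>
      inter_subset_inter_right _ (preimage_mono (Iic_subset_Iic.2 (by
        simp only [neg_le_neg_iff]; exact_mod_cast hab)))
    have := hanti.measure_iInter (fun n => (hmeas _).nullMeasurableSet)
      ⟨0, measure_ne_top μ _⟩
    rw [hI, measure_empty] at this
    have h0 : (⨅ n : ℕ, m (-(n : ℝ))) = 0 := this.symm
    have : (⨅ n : ℕ, m (-(n : ℝ))) < r := h0 ▸ pos_iff_ne_zero.2 hr0
    obtain ⟨n, hn⟩ := iInf_lt_iff.1 this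
    exact ⟨n, hn⟩
  obtain ⟨nL, hnL⟩ := hbdd
  set S : Set ℝ := {c | r ≤ m c} with hS
  have hSne : S.Nonempty := ⟨cU, hcU⟩
  have hSbdd : BddBelow S := ⟨-(nL : ℝ), fun c hc => by
    by_contra h
    push_neg at h
    exact absurd (le_trans hc (hmono h.le)) (not_le.2 hnL)⟩
  set c₀ := sInf S with hc₀
  refine ⟨F ∩ f ⁻¹' Iic c₀, inter_subset_left, hmeas _, ?_⟩
  have hub : m c₀ ≤ r := by
    -- Iic c₀ = Iio c₀ ∪ {c₀}
    have hsplit : F ∩ f ⁻¹' Iic c₀ ⊆ (F ∩ f ⁻¹' Iio c₀) ∪ (f ⁻¹' {c₀}) := by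
      intro x ⟨hxF, hx⟩
      rcases lt_or_eq_of_le (show f x ≤ c₀ from hx) with h | h
      · exact Or.inl ⟨hxF, h⟩
      · exact Or.inr h
    have hsing : μ (f ⁻¹' {c₀}) = 0 := by
      apply Set.Subsingleton.measure_zero _ μ
      intro a ha b hb
      exact hf.injective (ha.trans hb.symm)
    have hIio : μ (F ∩ f ⁻¹' Iio c₀) ≤ r := by
      have hU2 : (⋃ n : ℕ, F ∩ f ⁻¹' Iic (c₀ - 1 / ((n : ℝ) + 1))) = F ∩ f ⁻¹' Iio c₀ := by
        rw [← inter_iUnion, ← preimage_iUnion]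
        have : (⋃ n : ℕ, Iic (c₀ - 1 / ((n : ℝ) + 1))) = Iio c₀ := by
          ext x
          simp only [mem_iUnion, mem_Iic, mem_Iio]
          constructor
          · rintro ⟨n, hn⟩
            have h1 : (0:ℝ) < 1 / ((n:ℝ)+1) := by positivity
            linarith
          · intro hx
            obtain ⟨n, hn⟩ := exists_nat_one_div_lt (sub_pos.2 hx)
            exact ⟨n, by linarith⟩
        rw [this]
      have hmono2 : Monotone fun n : ℕ => F ∩ f ⁻¹' Iic (c₀ - 1 / ((n : ℝ) + 1)) := by
        intro a b hab
        apply inter_subset_inter_right _ (preimage_mono (Iic_subset_Iic.2 _))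
        have : 1 / ((b:ℝ)+1) ≤ 1 / ((a:ℝ)+1) := by
          apply one_div_le_one_div_of_le (by positivity)
          have := (Nat.cast_le (α := ℝ)).2 hab
          linarith
        linarith
      have := hmono2.measure_iUnion (μ := μ)
      rw [hU2] at this
      rw [this]
      apply iSup_le
      intro n
      -- m (c₀ - 1/(n+1)) ≤ r since c₀ - 1/(n+1) < c₀ = sInf S
      by_contra h
      push_neg at h
      have hmem : (c₀ - 1 / ((n:ℝ)+1)) ∈ S := h.le
      have := csInf_le hSbdd hmem
      have hpos : (0:ℝ) < 1 / ((n:ℝ)+1) := by positivity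
      linarith
    calc m c₀ ≤ μ (F ∩ f ⁻¹' Iio c₀) + μ (f ⁻¹' {c₀}) :=
          le_trans (measure_mono hsplit) (measure_union_le _ _)
      _ = μ (F ∩ f ⁻¹' Iio c₀) := by rw [hsing, add_zero]
      _ ≤ r := hIio
  have hlb : r ≤ m c₀ := by
    have hI2 : (⋂ n : ℕ, F ∩ f ⁻¹' Iic (c₀ + 1 / ((n : ℝ) + 1))) = F ∩ f ⁻¹' Iic c₀ := by
      rw [← inter_iInter, ← preimage_iInter]
      have : (⋂ n : ℕ, Iic (c₀ + 1 / ((n : ℝ) + 1))) = Iic c₀ := by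
        ext x
        simp only [mem_iInter, mem_Iic]
        constructor
        · intro hx
          by_contra h
          push_neg at h
          obtain ⟨n, hn⟩ := exists_nat_one_div_lt (sub_pos.2 h)
          have := hx n
          linarith
        · intro hx n
          have : (0:ℝ) < 1 / ((n:ℝ)+1) := by positivity
          linarith
      rw [this]
    have hanti2 : Antitone fun n : ℕ => F ∩ f ⁻¹' Iic (c₀ + 1 / ((n : ℝ) + 1)) := by
      intro a b hab
      apply inter_subset_inter_right _ (preimage_mono (Iic_subset_Iic.2 _))
      have : 1 / ((b:ℝ)+1) ≤ 1 / ((a:ℝ)+1) := by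
        apply one_div_le_one_div_of_le (by positivity)
        have := (Nat.cast_le (α := ℝ)).2 hab
        linarith
      linarith
    have := hanti2.measure_iInter (fun n => (hmeas _).nullMeasurableSet)
      ⟨0, measure_ne_top μ _⟩
    rw [hI2] at this
    rw [show m c₀ = μ (F ∩ f ⁻¹' Iic c₀) from rfl, this]
    apply le_iInf
    intro n
    have hpos : (0:ℝ) < 1 / ((n:ℝ)+1) := by positivity
    obtain ⟨c, hcS, hclt⟩ := (csInf_lt_iff hSbdd hSne).1 (by linarith : c₀ < c₀ + 1 / ((n:ℝ)+1))
    exact le_trans hcS (hmono hclt.le)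
  exact le_antisymm hub hlb

lemma abs_toReal_sub_le_symmDiff {X : Type} [MeasurableSpace X] (μ : Measure X)
    [IsFiniteMeasure μ] (A G : Set X) :
    |(μ G).toReal - (μ A).toReal| ≤ (μ (symmDiff A G)).toReal := by
  have hGA : μ (G \ A) ≤ μ (symmDiff A G) := measure_mono (by rw [Set.symmDiff_def]; exact subset_union_right)
  have hAG : μ (A \ G) ≤ μ (symmDiff A G) := measure_mono (by rw [Set.symmDiff_def]; exact subset_union_left)
  have hsub1 : G ⊆ A ∪ (G \ A) := by
    intro x hx
    by_cases h : x ∈ A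
    · exact Or.inl h
    · exact Or.inr ⟨hx, h⟩
  have hsub2 : A ⊆ G ∪ (A \ G) := by
    intro x hx
    by_cases h : x ∈ G
    · exact Or.inl h
    · exact Or.inr ⟨hx, h⟩
  have h1 : μ G ≤ μ A + μ (symmDiff A G) :=
    le_trans (le_trans (measure_mono hsub1) (measure_union_le _ _)) (by gcongr)
  have h2 : μ A ≤ μ G + μ (symmDiff A G) :=
    le_trans (le_trans (measure_mono hsub2) (measure_union_le _ _)) (by gcongr)
  have hfin : ∀ s : Set X, μ s ≠ ⊤ := fun s => measure_ne_top μ s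
  rw [abs_le]
  constructor
  · have := ENNReal.toReal_mono (by rw [ENNReal.add_ne_top]; exact ⟨hfin _, hfin _⟩) h2
    rw [ENNReal.toReal_add (hfin _) (hfin _)] at this
    linarith
  · have := ENNReal.toReal_mono (by rw [ENNReal.add_ne_top]; exact ⟨hfin _, hfin _⟩) h1
    rw [ENNReal.toReal_add (hfin _) (hfin _)] at this
    linarith

lemma extract_one {X : Type} [MeasurableSpace X] [StandardBorelSpace X]
    (μ : Measure X) [IsProbabilityMeasure μ] [NullSingletonClass μ]
    (𝓑 : Set (Set X))
    (hmeas : ∀ B ∈ 𝓑, MeasurableSet B)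
    (hinter : ∀ B ∈ 𝓑, ∀ C ∈ 𝓑, B ∩ C ∈ 𝓑)
    (hdense : ∀ A : Set X, MeasurableSet A → ∀ ε : ℝ, 0 < ε →
      ∃ B ∈ 𝓑, (μ (symmDiff A B)).toReal < ε)
    {F : Set X} (hF𝓑 : F ∈ 𝓑) {t ε : ℝ} (ht0 : 0 ≤ t)
    (htF : t ≤ (μ F).toReal) (hε : 0 < ε) :
    ∃ G ∈ 𝓑, G ⊆ F ∧ |(μ G).toReal - t| ≤ ε := by
  have hFm : MeasurableSet F := hmeas F hF𝓑
  obtain ⟨A, hAF, hAm, hAμ⟩ := sierpinski_subset μ hFm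
    (ENNReal.ofReal_le_of_le_toReal htF)
  have hAt : (μ A).toReal = t := by rw [hAμ, ENNReal.toReal_ofReal ht0]
  obtain ⟨B, hB𝓑, hBd⟩ := hdense A hAm ε hε
  refine ⟨B ∩ F, hinter B hB𝓑 F hF𝓑, inter_subset_right, ?_⟩
  have hsub : symmDiff A (B ∩ F) ⊆ symmDiff A B := by
    intro x hx
    rw [Set.mem_symmDiff] at hx ⊢
    rcases hx with ⟨hxA, hxn⟩ | ⟨hxBF, hxn⟩
    · exact Or.inl ⟨hxA, fun hB => hxn ⟨hB, hAF hxA⟩⟩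
    · exact Or.inr ⟨hxBF.1, hxn⟩
  calc |(μ (B ∩ F)).toReal - t|
      = |(μ (B ∩ F)).toReal - (μ A).toReal| := by rw [hAt]
    _ ≤ (μ (symmDiff A (B ∩ F))).toReal := abs_toReal_sub_le_symmDiff μ A (B ∩ F)
    _ ≤ (μ (symmDiff A B)).toReal :=
        ENNReal.toReal_mono (measure_ne_top μ _) (measure_mono hsub)
    _ ≤ ε := hBd.le

lemma chain_extract {X : Type} [MeasurableSpace X] [StandardBorelSpace X]
    (μ : Measure X) [IsProbabilityMeasure μ] [NullSingletonClass μ]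
    (𝓑 : Set (Set X))
    (hmeas : ∀ B ∈ 𝓑, MeasurableSet B)
    (hcompl : ∀ B ∈ 𝓑, Bᶜ ∈ 𝓑)
    (hinter : ∀ B ∈ 𝓑, ∀ C ∈ 𝓑, B ∩ C ∈ 𝓑)
    (hdense : ∀ A : Set X, MeasurableSet A → ∀ ε : ℝ, 0 < ε →
      ∃ B ∈ 𝓑, (μ (symmDiff A B)).toReal < ε)
    (t ε : ℝ) (ht : 0 < t) (hε : 0 < ε) :
    ∀ (n : ℕ) (F : Set X), F ∈ 𝓑 → (n : ℝ) * (t + ε) ≤ (μ F).toReal →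
    ∃ G : Fin n → Set X, (∀ j, G j ∈ 𝓑) ∧ (∀ j, G j ⊆ F) ∧
      Pairwise (Function.onFun Disjoint G) ∧
      (∀ j, |(μ (G j)).toReal - t| ≤ ε) ∧
      (μ (F \ ⋃ j, G j)).toReal ≤ (μ F).toReal - n * (t - ε) := by
  intro n
  induction n with
  | zero =>
    intro F hF𝓑 _
    refine ⟨fun j => j.elim0, fun j => j.elim0, fun j => j.elim0, fun i => i.elim0,
      fun j => j.elim0, ?_⟩
    simp only [Set.iUnion_of_empty, Set.diff_empty, Nat.cast_zero, zero_mul, sub_zero, le_refl]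
  | succ n ih =>
    intro F hF𝓑 hn
    have hε' : (0:ℝ) < ε := hε
    have hFt : μ F ≠ ⊤ := measure_ne_top μ F
    have htle : t ≤ (μ F).toReal := by
      have : (1:ℝ) * (t + ε) ≤ ((n:ℝ)+1) * (t+ε) := by nlinarith [Nat.cast_nonneg (α := ℝ) n]
      push_cast at hn; nlinarith
    obtain ⟨G₀, hG₀𝓑, hG₀F, hG₀μ⟩ := extract_one μ 𝓑 hmeas hinter hdense hF𝓑 ht.le htle hε
    have hG₀m : MeasurableSet G₀ := hmeas _ hG₀𝓑
    set F' : Set X := F ∩ G₀ᶜ with hF'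
    have hF'𝓑 : F' ∈ 𝓑 := hinter F hF𝓑 G₀ᶜ (hcompl _ hG₀𝓑)
    have hF'eq : F' = F \ G₀ := by rw [hF', Set.diff_eq]
    have hμF' : (μ F').toReal = (μ F).toReal - (μ G₀).toReal := by
      rw [hF'eq, measure_diff hG₀F hG₀m.nullMeasurableSet (measure_ne_top μ _),
        ENNReal.toReal_sub_of_le (measure_mono hG₀F) hFt]
    have hG₀lb : t - ε ≤ (μ G₀).toReal := by
      have := abs_le.1 hG₀μ; linarith
    have hG₀ub : (μ G₀).toReal ≤ t + ε := by
      have := abs_le.1 hG₀μ; linarith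
    have hnF' : (n : ℝ) * (t + ε) ≤ (μ F').toReal := by
      rw [hμF']; push_cast at hn ⊢; nlinarith
    obtain ⟨G', hG'𝓑, hG'F, hG'disj, hG'μ, hG'rem⟩ := ih F' hF'𝓑 hnF'
    set Gc : Fin (n+1) → Set X := Fin.cons G₀ G' with hGc
    refine ⟨Gc, ?_, ?_, ?_, ?_, ?_⟩
    · intro j
      induction j using Fin.cases with
      | zero => simpa [hGc] using hG₀𝓑
      | succ j => simpa [hGc] using hG'𝓑 j
    · intro j
      induction j using Fin.cases with
      | zero => simpa [hGc] using hG₀F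
      | succ j => simpa [hGc] using (hG'F j).trans inter_subset_left
    · intro i j hij
      have hd0 : ∀ j, Disjoint G₀ (G' j) := fun j =>
        Disjoint.mono_right ((hG'F j).trans inter_subset_right) disjoint_compl_right
      induction i using Fin.cases with
      | zero =>
        induction j using Fin.cases with
        | zero => exact absurd rfl hij
        | succ j =>
          simp only [Function.onFun, Fin.cons_zero, Fin.cons_succ]
          exact hd0 j
      | succ i =>
        induction j using Fin.cases with
        | zero =>
          simp only [Function.onFun, Fin.cons_zero, Fin.cons_succ]
          exact (hd0 i).symm
        | succ j =>
          simp only [Function.onFun, Fin.cons_succ]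
          exact hG'disj (fun h : i = j => hij (congrArg Fin.succ h))
    · intro j
      refine Fin.cases ?_ ?_ j
      · simpa [hGc] using hG₀μ
      · intro j'; simpa [hGc] using hG'μ j'
    · have hUcons : (⋃ j, Gc j) = G₀ ∪ ⋃ j, G' j := by
        ext x
        simp only [hGc, mem_iUnion, Fin.exists_fin_succ, Fin.cons_zero, Fin.cons_succ, mem_union]
      have hset : F \ ⋃ j, Gc j = F' \ ⋃ j, G' j := by
        rw [hUcons, hF']
        ext x
        simp only [mem_diff, mem_union, mem_inter_iff, mem_compl_iff]
        tauto
      rw [hset]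
      have : (μ F').toReal - (n:ℝ) * (t - ε) ≤ (μ F).toReal - ((n:ℝ)+1) * (t - ε) := by
        rw [hμF']; nlinarith
      push_cast
      exact le_trans hG'rem this

set_option maxHeartbeats 1000000 in
/-- Given a measure-dense system `𝓑` of Borel sets in a standard non-atomic
Borel probability space, a finite partition `F₁, …, F_s ∈ 𝓑` of `X` into sets of positive
measure, and `δ ∈ (0, 1]`, one can find `q ≥ 1`, integers `pᵢ` with
`0 ≤ μ(Fᵢ) - pᵢ/q < δ/(2s)`, and (writing `p = p₁ + ⋯ + p_s`, so `p ≥ 1` and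
`1 - p/q ≤ δ/2`) for each `i` pairwise disjoint sets `G_{i,1}, …, G_{i,pᵢ} ∈ 𝓑` contained
in `Fᵢ` with `|μ(G_{i,j}) - 1/q| ≤ δ/(2spq)` and `μ(Fᵢ \ ⋃ⱼ G_{i,j}) ≤ δ/s`.  In particular
the `G_{i,j}` are pairwise disjoint and their union covers `X` up to measure at most `δ`. -/
theorem approximate_equipartition
    {X : Type} [MeasurableSpace X] [StandardBorelSpace X]
    (μ : Measure X) [IsProbabilityMeasure μ] [NullSingletonClass μ]
    (𝓑 : Set (Set X))
    (hmeas : ∀ B ∈ 𝓑, MeasurableSet B)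
    (hcompl : ∀ B ∈ 𝓑, Bᶜ ∈ 𝓑)
    (hinter : ∀ B ∈ 𝓑, ∀ C ∈ 𝓑, B ∩ C ∈ 𝓑)
    (hdense : ∀ A : Set X, MeasurableSet A → ∀ ε : ℝ, 0 < ε →
      ∃ B ∈ 𝓑, (μ (symmDiff A B)).toReal < ε)
    (s : ℕ) (F : Fin s → Set X) (hF : ∀ i, F i ∈ 𝓑)
    (hFdisj : Pairwise (Function.onFun Disjoint F))
    (hFcover : (⋃ i, F i) = Set.univ)
    (hFpos : ∀ i, 0 < μ (F i))
    (δ : ℝ) (hδ0 : 0 < δ) (hδ1 : δ ≤ 1) :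
    ∃ (q : ℕ), 1 ≤ q ∧ ∃ p : Fin s → ℕ,
      (∀ i, 0 ≤ (μ (F i)).toReal - (p i : ℝ) / q ∧
        (μ (F i)).toReal - (p i : ℝ) / q < δ / (2 * s)) ∧
      1 ≤ ∑ i, p i ∧
      1 - ((∑ i, p i : ℕ) : ℝ) / q ≤ δ / 2 ∧
      ∃ G : (i : Fin s) → Fin (p i) → Set X,
        (∀ i j, G i j ∈ 𝓑) ∧
        (∀ i j, G i j ⊆ F i) ∧
        (∀ i, Pairwise (Function.onFun Disjoint (G i))) ∧
        (∀ i j, |(μ (G i j)).toReal - 1 / q| ≤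
          δ / (2 * s * ((∑ i, p i : ℕ) : ℝ) * q)) ∧
        (∀ i, (μ (F i \ ⋃ j, G i j)).toReal ≤ δ / s) ∧
        Pairwise (Function.onFun Disjoint
          (fun x : Σ i : Fin s, Fin (p i) => G x.1 x.2)) ∧
        (μ (⋃ i, ⋃ j, G i j)ᶜ).toReal ≤ δ := by
  -- s is positive
  have hs : 0 < s := by
    rcases Nat.eq_zero_or_pos s with h | h
    · subst h
      have he : (⋃ i : Fin 0, F i) = (∅ : Set X) := iUnion_of_empty _
      rw [hFcover] at he
      have h1 : μ (Set.univ : Set X) = 1 := measure_univ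
      rw [he, measure_empty] at h1
      exact absurd h1 (by simp)
    · exact h
  have hsR : (0:ℝ) < s := by exact_mod_cast hs
  have hsR1 : (1:ℝ) ≤ s := by exact_mod_cast hs
  -- choose q
  set q : ℕ := ⌈2 * (s:ℝ) / δ⌉₊ + 1 with hqdef
  have hq1 : 1 ≤ q := Nat.le_add_left 1 _
  have hqR : (0:ℝ) < q := by positivity
  have hqR1 : (1:ℝ) ≤ q := by exact_mod_cast hq1
  have hqgt : 2 * (s:ℝ) / δ < q := by
    have h1 : 2 * (s:ℝ) / δ ≤ ⌈2 * (s:ℝ) / δ⌉₊ := Nat.le_ceil _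
    have h2 : ((⌈2 * (s:ℝ) / δ⌉₊ : ℝ)) < q := by
      rw [hqdef]; push_cast; linarith
    linarith
  have h2sq : 2 * (s:ℝ) < δ * q := by
    rw [div_lt_iff₀ hδ0] at hqgt; linarith
  have h1q : 1 / (q:ℝ) < δ / (2 * s) := by
    rw [div_lt_div_iff₀ hqR (by positivity)]; linarith
  have hsq : (s:ℝ) / q < δ / 2 := by
    rw [div_lt_div_iff₀ hqR (by norm_num)]; linarith
  have hsltq : (s:ℝ) < q := by nlinarith
  -- ν and p
  set ν : Fin s → ℝ := fun i => (μ (F i)).toReal with hν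
  have hν0 : ∀ i, 0 < ν i := fun i =>
    ENNReal.toReal_pos (hFpos i).ne' (measure_ne_top μ _)
  set p : Fin s → ℕ := fun i => ⌊(q:ℝ) * ν i⌋₊ with hp
  have hp_le : ∀ i, (p i : ℝ) ≤ q * ν i := fun i => Nat.floor_le (by positivity)
  have hp_gt : ∀ i, (q:ℝ) * ν i < p i + 1 := fun i => Nat.lt_floor_add_one _
  have hfirst : ∀ i, 0 ≤ ν i - (p i : ℝ) / q ∧ ν i - (p i : ℝ) / q < δ / (2 * s) := by
    intro i
    constructor
    · have := hp_le i
      rw [sub_nonneg, div_le_iff₀ hqR]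
      linarith
    · have hgt := hp_gt i
      have hδq : ν i < ((p i : ℝ) + 1)/q := by
        rw [lt_div_iff₀ hqR]; nlinarith
      have hdiff : ((p i:ℝ)+1)/q - (p i:ℝ)/q = 1/q := by ring
      have h1 : ν i - (p i : ℝ) / q < 1 / q := by linarith
      linarith
  -- sum of ν is 1
  have hsum : ∑ i, ν i = 1 := by
    have h1 : μ (⋃ i, F i) = ∑' i, μ (F i) :=
      measure_iUnion hFdisj (fun i => hmeas _ (hF i))
    rw [hFcover, measure_univ, tsum_fintype] at h1
    have h2 : ((1:ℝ≥0∞)).toReal = (∑ i, μ (F i)).toReal := by rw [← h1]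
    rw [ENNReal.toReal_sum (fun i _ => measure_ne_top μ _)] at h2
    simpa using h2.symm
  -- P
  set P : ℕ := ∑ i, p i with hP
  have hPR : ((P:ℕ):ℝ) = ∑ i, (p i : ℝ) := by push_cast [hP]; rfl
  have hPgt : (q:ℝ) - s < P := by
    have h1 : ∑ i, ((q:ℝ) * ν i - 1) < ∑ i, (p i : ℝ) := by
      apply Finset.sum_lt_sum_of_nonempty
      · exact Finset.univ_nonempty_iff.2 ⟨⟨0, hs⟩⟩
      · intro i _
        have := hp_gt i; linarith
    have h2 : ∑ i, ((q:ℝ) * ν i - 1) = q * (∑ i, ν i) - s := by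
      rw [Finset.sum_sub_distrib, ← Finset.mul_sum]
      simp [Finset.card_univ]
    rw [h2, hsum, mul_one] at h1
    rw [hPR]; linarith
  have hP1 : 1 ≤ P := by
    have h0 : (0:ℝ) < P := by linarith
    exact Nat.cast_pos.mp h0
  have hPR1 : (1:ℝ) ≤ P := by exact_mod_cast hP1
  have hthird : 1 - ((P:ℕ):ℝ) / q ≤ δ / 2 := by
    have h2 : ((q:ℝ) - s)/q < ((P:ℕ):ℝ)/q := by gcongr
    have h3 : ((q:ℝ) - s)/q = 1 - s/q := by field_simp
    linarith
  -- the fine parameters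
  set ε : ℝ := δ / (2 * s * ((P:ℕ):ℝ) * q) with hεdef
  have hε : 0 < ε := by
    rw [hεdef]; positivity
  have hεsmall : ε ≤ 1 / (2*(q:ℝ)) := by
    rw [hεdef]
    apply div_le_div₀ (by norm_num) hδ1 (by positivity)
    have hsp : (1:ℝ) ≤ (s:ℝ) * P := by nlinarith
    nlinarith [mul_le_mul_of_nonneg_right hsp (by positivity : (0:ℝ) ≤ 2*(q:ℝ))]
  set t : ℝ := 1/(q:ℝ) - ε/2 with htdef
  clear_value t ε P p ν q
  have ht : 0 < t := by
    rw [htdef]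
    have hq0 : (0:ℝ) < 1/q := by positivity
    have hhalf : 1/(2*(q:ℝ)) = (1/(q:ℝ))/2 := by ring
    rw [hhalf] at hεsmall
    linarith
  -- extraction per i
  have hchain : ∀ i : Fin s, ∃ G : Fin (p i) → Set X,
      (∀ j, G j ∈ 𝓑) ∧ (∀ j, G j ⊆ F i) ∧
      Pairwise (Function.onFun Disjoint G) ∧
      (∀ j, |(μ (G j)).toReal - t| ≤ ε/4) ∧
      (μ (F i \ ⋃ j, G j)).toReal ≤ (μ (F i)).toReal - (p i : ℝ) * (t - ε/4) := by
    intro i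
    refine chain_extract μ 𝓑 hmeas hcompl hinter hdense t (ε/4) ht (by linarith)
      (p i) (F i) (hF i) ?_
    have h1 : t + ε/4 ≤ 1/q := by rw [htdef]; linarith
    have h2 : (p i : ℝ) * (t + ε/4) ≤ (p i : ℝ) * (1/q) := by
      apply mul_le_mul_of_nonneg_left h1 (by positivity)
    have h3 : (p i : ℝ) * (1/q) ≤ ν i := by
      rw [mul_one_div]
      have := (hfirst i).1
      linarith
    have hν' : (μ (F i)).toReal = ν i := by rw [hν]
    rw [hν']
    exact le_trans h2 h3
  choose G hG𝓑 hGF hGdisj hGμ hGrem using hchain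
  have hpile : ∀ i, (p i : ℝ) ≤ P := by
    intro i
    have h : p i ≤ ∑ j, p j := Finset.single_le_sum (f := p) (fun j _ => Nat.zero_le _) (Finset.mem_univ i)
    rw [← hP] at h
    exact_mod_cast h
  -- measure bound for each G i j
  have hGμ' : ∀ i j, |(μ (G i j)).toReal - 1 / q| ≤ δ / (2 * s * ((P:ℕ):ℝ) * q) := by
    intro i j
    have h1 := abs_le.1 (hGμ i j)
    rw [abs_le]
    rw [htdef] at h1
    constructor <;> [linarith; linarith]
  -- remainder bound
  have hrem : ∀ i, (μ (F i \ ⋃ j, G i j)).toReal ≤ δ / s := by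
    intro i
    have h1 := hGrem i
    have h2 : (p i : ℝ) * (t - ε/4) = (p i : ℝ)/q - (p i : ℝ) * (3*ε/4) := by
      rw [htdef]; ring
    have h3 : ν i - (p i : ℝ)/q < δ/(2*s) := (hfirst i).2
    have h4 : (p i : ℝ) * (3*ε/4) ≤ (P:ℝ) * ε := by
      nlinarith [hpile i, hε.le, (Nat.cast_nonneg (α := ℝ) (p i))]
    have hPne : ((P:ℕ):ℝ) ≠ 0 := by positivity
    have hsne : (s:ℝ) ≠ 0 := ne_of_gt hsR
    have hqne : (q:ℝ) ≠ 0 := ne_of_gt hqR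
    have h5 : ((P:ℕ):ℝ) * ε = δ / (2 * s * q) := by
      rw [hεdef]
      field_simp
    have h6 : δ / (2 * s * q) ≤ δ / (2 * s) := by
      apply div_le_div_of_nonneg_left hδ0.le (by nlinarith)
      nlinarith
    have h7 : δ/(2*(s:ℝ)) + δ/(2*(s:ℝ)) = δ/(s:ℝ) := by
      field_simp
      ring
    have hν' : (μ (F i)).toReal = ν i := by rw [hν]
    rw [hν'] at h1
    linarith
  -- global sigma disjointness
  have hsigma : Pairwise (Function.onFun Disjoint
      (fun x : Σ i : Fin s, Fin (p i) => G x.1 x.2)) := by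
    rintro ⟨i, j⟩ ⟨i', j'⟩ hne
    rcases eq_or_ne i i' with rfl | hii
    · have hjj : j ≠ j' := by
        intro h; exact hne (by rw [h])
      exact hGdisj i hjj
    · exact Disjoint.mono (hGF i j) (hGF i' j') (hFdisj hii)
  -- complement bound
  have hsubset : (⋃ i, ⋃ j, G i j)ᶜ ⊆ ⋃ i, (F i \ ⋃ j, G i j) := by
    intro x hx
    have hxF : x ∈ ⋃ i, F i := by rw [hFcover]; exact mem_univ x
    obtain ⟨_, ⟨i, rfl⟩, hxFi⟩ := hxF
    refine mem_iUnion.2 ⟨i, hxFi, ?_⟩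
    intro hxG
    exact hx (mem_iUnion.2 ⟨i, hxG⟩)
  have hcomp : (μ (⋃ i, ⋃ j, G i j)ᶜ).toReal ≤ δ := by
    have h1 : μ ((⋃ i, ⋃ j, G i j)ᶜ) ≤ ∑ i, μ (F i \ ⋃ j, G i j) :=
      le_trans (measure_mono hsubset)
        ((measure_iUnion_le _).trans_eq (tsum_fintype _))
    have h2 : (μ ((⋃ i, ⋃ j, G i j)ᶜ)).toReal ≤ (∑ i, μ (F i \ ⋃ j, G i j)).toReal :=
      ENNReal.toReal_mono (by
        apply ENNReal.sum_ne_top.2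
        intro i _
        exact measure_ne_top μ _) h1
    rw [ENNReal.toReal_sum (fun i _ => measure_ne_top μ _)] at h2
    have h3 : ∑ i, (μ (F i \ ⋃ j, G i j)).toReal ≤ ∑ _i : Fin s, δ / s :=
      Finset.sum_le_sum (fun i _ => hrem i)
    have h4 : ∑ _i : Fin s, δ / s = δ := by
      rw [Finset.sum_const, Finset.card_univ, Fintype.card_fin, nsmul_eq_mul]
      field_simp
    linarith
  rw [hP] at hP1 hthird hGμ'
  simp only [hν] at hfirst
  exact ⟨q, hq1, p, hfirst, hP1, hthird, G, hG𝓑, hGF, hGdisj, hGμ', hrem, hsigma, hcomp⟩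
end

section
/- Let A₀ be a finite cyclic group, Γ a countable set, and A = ⊕_Γ A₀ the direct sum of copies of A₀ indexed by Γ (a countable discrete torsion abelian group). Let Â denote the Pontryagin dual of A, a compact Hausdorff abelian topological group. For a ∈ A let ev_a : Â → ℂ denote the continuous function χ ↦ χ(a). Then inside the algebra C(Â, ℂ) of continuous complex-valued functions on Â, the ℂ-linear span of {ev_a : a ∈ A} is equal to the ℂ-linear span of the indicator functions {1_U : U ⊆ Â compact and open}. -/
open Topology

section Top

variable {X : Type} [TopologicalSpace X] [DiscreteTopology X]

theorem compactOpen_eq_induced_pi {Y : Type} [TopologicalSpace Y] :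
    (ContinuousMap.compactOpen : TopologicalSpace C(X, Y)) =
      TopologicalSpace.induced (fun f : C(X, Y) => (f : X → Y)) Pi.topologicalSpace := by
  apply le_antisymm
  · exact continuous_iff_le_induced.mp continuous_coeFun
  · rw [ContinuousMap.compactOpen_eq]
    apply le_generateFrom
    rintro s ⟨K, hK, U, hU, rfl⟩
    simp only [Set.mem_setOf_eq] at hK hU
    have hKfin : K.Finite := hK.finite ⟨inferInstance⟩
    rw [isOpen_induced_iff]
    refine ⟨⋂ a ∈ K, (fun g : X → Y => g a) ⁻¹' U, hKfin.isOpen_biInter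
      fun a _ => (continuous_apply (A := fun _ : X => Y) a).isOpen_preimage U hU, ?_⟩
    ext f
    simp [Set.MapsTo]

variable {M N : Type} [Monoid M] [TopologicalSpace M] [DiscreteTopology M]
  [Monoid N] [TopologicalSpace N]

theorem isInducing_eval :
    Topology.IsInducing (fun (χ : ContinuousMonoidHom M N) (a : M) => χ a) := by
  have h1 := ContinuousMonoidHom.isInducing_toContinuousMap M N
  constructor
  rw [h1.eq_induced, compactOpen_eq_induced_pi, induced_compose]
  rfl

end Top

section Dual
variable {M : Type} [Monoid M] [TopologicalSpace M] [DiscreteTopology M]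

theorem isClosed_range_eval :
    IsClosed (Set.range (fun (χ : ContinuousMonoidHom M Circle) (a : M) => χ a)) := by
  have : Set.range (fun (χ : ContinuousMonoidHom M Circle) (a : M) => χ a) =
      {f : M → Circle | ∀ x y : M, f (x * y) = f x * f y} := by
    ext f
    constructor
    · rintro ⟨χ, rfl⟩ x y; exact map_mul χ x y
    · intro hf
      have h1 : f 1 = 1 := by
        have := hf 1 1
        rw [mul_one] at this
        exact (mul_eq_right.mp this.symm)
      exact ⟨⟨⟨⟨f, h1⟩, fun x y => hf x y⟩, continuous_of_discreteTopology⟩, rfl⟩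
  rw [this]
  rw [Set.setOf_forall]
  refine isClosed_iInter fun x => ?_
  rw [Set.setOf_forall]
  refine isClosed_iInter fun y => ?_
  exact isClosed_eq (continuous_apply _) ((continuous_apply x).mul (continuous_apply y))

instance : CompactSpace (ContinuousMonoidHom M Circle) := by
  refine Topology.IsClosedEmbedding.compactSpace (f := fun (χ : ContinuousMonoidHom M Circle) (a : M) => χ a) ?_
  exact ⟨⟨isInducing_eval, fun χ η h => DFunLike.ext _ _ fun a => congrFun h a⟩, isClosed_range_eval⟩

theorem continuous_eval_dual (a : M) :
    Continuous (fun χ : ContinuousMonoidHom M Circle => χ a) :=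
  (continuous_apply a).comp isInducing_eval.continuous

theorem exists_finset_basic {U : Set (ContinuousMonoidHom M Circle)} (hU : IsOpen U)
    {χ : ContinuousMonoidHom M Circle} (hχ : χ ∈ U) :
    ∃ F : Finset M, {η : ContinuousMonoidHom M Circle | ∀ a ∈ F, η a = χ a} ⊆ U := by
  obtain ⟨V, hV, rfl⟩ := (isInducing_eval (M := M) (N := Circle)).isOpen_iff.mp hU
  obtain ⟨I, u, hu, hsub⟩ := isOpen_pi_iff.mp hV _ hχ
  refine ⟨I, fun η hη => ?_⟩
  refine Set.mem_preimage.mpr (hsub fun a ha => ?_)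
  rw [Set.mem_setOf_eq] at hη
  have := hη a ha
  show η a ∈ u a
  rw [this]
  exact (hu a ha).2

end Dual

section Roots

theorem finite_roots (N : ℕ) (hN : 0 < N) : {z : Circle | z ^ N = 1}.Finite := by
  have hfin : {z : ℂ | z ^ N = 1}.Finite := by
    refine (Polynomial.nthRoots N (1:ℂ)).toFinset.finite_toSet.subset fun z hz => ?_
    exact Finset.mem_coe.mpr (Multiset.mem_toFinset.mpr ((Polynomial.mem_nthRoots hN).mpr hz))
  have : {z : Circle | z ^ N = 1} = ((↑) : Circle → ℂ) ⁻¹' {z : ℂ | z ^ N = 1} := by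
    ext z
    simp only [Set.mem_setOf_eq, Set.mem_preimage]
    rw [← Circle.coe_inj, Circle.coe_one]
    norm_cast
  rw [this]
  exact hfin.preimage (Circle.coe_injective.injOn)

variable {M : Type} [Monoid M] [TopologicalSpace M] [DiscreteTopology M]

/-- fibers of evaluation are open, assuming all values are N-th roots of unity -/
theorem isOpen_fiber {N : ℕ} (hN : 0 < N)
    (htors : ∀ (η : ContinuousMonoidHom M Circle) (a : M), (η a) ^ N = 1)
    (a : M) (z : Circle) :
    IsOpen {η : ContinuousMonoidHom M Circle | η a = z} := by
  by_cases hz : z ^ N = 1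
  · have : {η : ContinuousMonoidHom M Circle | η a = z} =
        (fun η : ContinuousMonoidHom M Circle => η a) ⁻¹' ({w : Circle | w ^ N = 1} \ {z})ᶜ := by
      ext η
      simp only [Set.mem_setOf_eq, Set.mem_preimage, Set.mem_compl_iff, Set.mem_diff,
        Set.mem_singleton_iff, not_and, not_not]
      exact ⟨fun h _ => h, fun h => h (htors η a)⟩
    rw [this]
    exact (((finite_roots N hN).diff).isClosed.isOpen_compl).preimage (continuous_eval_dual a)
  · have : {η : ContinuousMonoidHom M Circle | η a = z} = ∅ := by
      ext η
      simp only [Set.mem_setOf_eq, Set.mem_empty_iff_false, iff_false]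
      intro h
      exact hz (h ▸ htors η a)
    rw [this]; exact isOpen_empty

theorem isClosed_fiber (a : M) (z : Circle) :
    IsClosed {η : ContinuousMonoidHom M Circle | η a = z} :=
  isClosed_singleton.preimage (continuous_eval_dual a)

end Roots

section Orth
variable {A : Type} [AddCommGroup A] [TopologicalSpace A] [DiscreteTopology A]

open Multiplicative

open scoped Classical in
theorem orthogonality (H : Finset A)
    (hadd : ∀ a ∈ H, ∀ b ∈ H, a + b ∈ H) (hneg : ∀ a ∈ H, -a ∈ H)
    (χ' χ : ContinuousMonoidHom (Multiplicative A) Circle) :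
    (∑ a ∈ H, (((χ' (ofAdd a))⁻¹ * χ (ofAdd a) : Circle) : ℂ)) =
      if (∀ a ∈ H, χ (ofAdd a) = χ' (ofAdd a)) then (H.card : ℂ) else 0 := by
  set ψ : A → ℂ := fun a => (((χ' (ofAdd a))⁻¹ * χ (ofAdd a) : Circle) : ℂ) with hψ
  have hψmul : ∀ a b : A, ψ (a + b) = ψ a * ψ b := by
    intro a b
    simp only [hψ, ofAdd_add, map_mul, mul_inv, Circle.coe_mul, Circle.coe_inv]
    ring
  have hψone : ∀ a : A, (χ (ofAdd a) = χ' (ofAdd a)) ↔ ψ a = 1 := by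
    intro a
    simp only [hψ]
    rw [Circle.coe_eq_one, inv_mul_eq_one]
    exact eq_comm
  classical
  split_ifs with h
  · rw [Finset.sum_congr rfl (fun a ha => (hψone a).mp (h a ha))]
    simp
  · push_neg at h
    obtain ⟨b, hb, hbne⟩ := h
    have hψb : ψ b ≠ 1 := fun hc => hbne ((hψone b).mpr hc)
    have key : ∑ a ∈ H, ψ a = (∑ a ∈ H, ψ a) * ψ b := by
      have h1 : ∑ a ∈ H, ψ a = ∑ a ∈ H, ψ (a + b) := by
        refine Finset.sum_nbij' (fun a => a + -b) (fun a => a + b) ?_ ?_ ?_ ?_ ?_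
        · intro a ha; exact hadd a ha (-b) (hneg b hb)
        · intro a ha; exact hadd a ha b hb
        · intro a _; simp
        · intro a _; simp
        · intro a _; rw [neg_add_cancel_right]
      calc ∑ a ∈ H, ψ a = ∑ a ∈ H, ψ (a + b) := h1
        _ = ∑ a ∈ H, ψ a * ψ b := Finset.sum_congr rfl fun a _ => hψmul a b
        _ = (∑ a ∈ H, ψ a) * ψ b := (Finset.sum_mul _ _ _).symm
    have h0 : (∑ a ∈ H, ψ a) * (ψ b - 1) = 0 := by
      rw [mul_sub, mul_one]
      exact sub_eq_zero.mpr key.symm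
    rcases mul_eq_zero.mp h0 with h' | h'
    · exact h'
    · exact (hψb (sub_eq_zero.mp h')).elim

end Orth

open MeasureTheory Multiplicative

/-- Let `A₀` be a finite cyclic group, `Γ` a countable index set and
`A = ⊕_Γ A₀` (a discrete torsion abelian group), and let `Â` be the Pontryagin dual of
`A`.  Inside `C(Â, ℂ)`, the `ℂ`-linear span of the evaluation functions `ev_a : χ ↦ χ(a)`
(`a ∈ A`) coincides with the `ℂ`-linear span of the indicator functions of compact open
subsets of `Â`. -/
theorem span_characters_eq_span_indicators_compact_open
    (A₀ : Type) [AddCommGroup A₀] [Fintype A₀] (hcyc : IsAddCyclic A₀)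
    (Γ : Type) [Countable Γ]
    (A : Type) [AddCommGroup A] [TopologicalSpace A] [DiscreteTopology A]
    [IsTopologicalAddGroup A]
    (e : A ≃+ (Γ →₀ A₀)) :
    Submodule.span ℂ
      {f : C(PontryaginDual (Multiplicative A), ℂ) |
        ∃ a : A, ∀ χ : PontryaginDual (Multiplicative A),
          f χ = (χ (Multiplicative.ofAdd a) : ℂ)} =
    Submodule.span ℂ
      {f : C(PontryaginDual (Multiplicative A), ℂ) |
        ∃ U : Set (PontryaginDual (Multiplicative A)), IsCompact U ∧ IsOpen U ∧
          ∀ χ, f χ = U.indicator (fun _ => (1 : ℂ)) χ} := by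
  classical
  set G := Multiplicative A with hG
  haveI : CompactSpace (PontryaginDual G) :=
    inferInstanceAs (CompactSpace (ContinuousMonoidHom G Circle))
  set N := Fintype.card A₀ with hNdef
  have hN : 0 < N := Fintype.card_pos
  have htors : ∀ (η : ContinuousMonoidHom G Circle) (g : G), (η g) ^ N = 1 := by
    intro η g
    have h0 : N • (Multiplicative.toAdd g) = (0 : A) := by
      apply e.injective
      rw [map_nsmul, map_zero]
      ext γ
      rw [Finsupp.smul_apply, Finsupp.coe_zero, Pi.zero_apply]
      exact card_nsmul_eq_zero
    have : g ^ N = 1 := by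
      rw [show g = ofAdd (Multiplicative.toAdd g) from rfl, ← ofAdd_nsmul, h0, ofAdd_zero]
    rw [← map_pow, this, map_one]
  have hev : ∀ a : A, Continuous (fun χ : PontryaginDual G => (χ (ofAdd a) : ℂ)) :=
    fun a => continuous_subtype_val.comp
      (continuous_eval_dual (M := G) (ofAdd a))
  -- the continuous evaluation maps
  let ev : A → C(PontryaginDual G, ℂ) := fun a => ⟨fun χ => (χ (ofAdd a) : ℂ), hev a⟩
  apply le_antisymm
  · -- characters are in the span of indicators
    rw [Submodule.span_le]
    rintro f ⟨a, ha⟩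
    let Rfin := (finite_roots N hN).toFinset
    have hclopen : ∀ z : Circle, IsClopen {η : ContinuousMonoidHom G Circle | η (ofAdd a) = z} :=
      fun z => ⟨isClosed_fiber (ofAdd a) z, isOpen_fiber hN htors (ofAdd a) z⟩
    let g : Circle → C(PontryaginDual G, ℂ) := fun z =>
      ⟨fun χ => ({η : ContinuousMonoidHom G Circle | η (ofAdd a) = z}).indicator
          (fun _ => (1:ℂ)) χ,
        continuous_indicator (fun x hx => absurd hx (Set.eq_empty_iff_forall_notMem.mp (hclopen z).frontier_eq x))
          continuous_const.continuousOn⟩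
    have hf : f = ∑ z ∈ Rfin, (z : ℂ) • g z := by
      ext χ
      rw [ha]
      rw [ContinuousMap.sum_apply]
      have : ∀ z ∈ Rfin, ((z : ℂ) • g z) χ = if χ (ofAdd a) = z then (z:ℂ) else 0 := by
        intro z _
        rw [ContinuousMap.smul_apply]
        show (z:ℂ) • ({η : ContinuousMonoidHom G Circle | η (ofAdd a) = z}).indicator
          (fun _ => (1:ℂ)) χ = _
        erw [Set.indicator_apply]
        simp only [Set.mem_setOf_eq, smul_eq_mul, mul_ite, mul_one, mul_zero]
        rfl
      rw [Finset.sum_congr rfl this, Finset.sum_ite_eq Rfin (χ (ofAdd a)) (fun z => (z:ℂ))]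
      exact (if_pos ((finite_roots N hN).mem_toFinset.mpr (htors χ (ofAdd a)))).symm
    rw [hf]
    refine Submodule.sum_mem _ fun z hz => Submodule.smul_mem _ _ (Submodule.subset_span ?_)
    refine ⟨{η : ContinuousMonoidHom G Circle | η (ofAdd a) = z},
      ((hclopen z).isClosed).isCompact, (hclopen z).isOpen, fun χ => rfl⟩
  · -- indicators of compact opens are in the span of characters
    rw [Submodule.span_le]
    rintro f ⟨U, hUc, hUo, hfU⟩
    -- choose basic neighborhoods inside U
    have hbasic : ∀ χ : {x : PontryaginDual G // x ∈ U}, ∃ F : Finset G,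
        {η : ContinuousMonoidHom G Circle | ∀ a ∈ F, η a = χ.1 a} ⊆ U :=
      fun χ => exists_finset_basic hUo χ.2
    choose F hF using hbasic
    let V : {x : PontryaginDual G // x ∈ U} → Set (PontryaginDual G) := fun i =>
      {η : ContinuousMonoidHom G Circle | ∀ a ∈ F i, η a = i.1 a}
    have hVopen : ∀ i, IsOpen (V i) := by
      intro i
      have hVeq : V i = ⋂ a ∈ F i, {η : ContinuousMonoidHom G Circle | η a = i.1 a} := by
        ext η
        simp only [V, Set.mem_iInter, Set.mem_setOf_eq]
        exact (Set.mem_iInter₂ (x := (η : ContinuousMonoidHom G Circle)) (s := fun a (_ : a ∈ F i) => {η : ContinuousMonoidHom G Circle | η a = i.1 a})).symm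
      rw [hVeq]
      exact (F i).finite_toSet.isOpen_biInter fun a _ => isOpen_fiber hN htors a _
    have hcover : U ⊆ ⋃ i, V i := fun χ hχ =>
      Set.mem_iUnion.mpr ⟨⟨χ, hχ⟩, fun a _ => rfl⟩
    obtain ⟨t, ht⟩ := hUc.elim_finite_subcover V hVopen hcover
    -- the finite support set
    let S : Finset Γ := t.biUnion fun i => (F i).biUnion fun g => (e (Multiplicative.toAdd g)).support
    -- the finite subgroup
    let Hset : Set A := {a : A | ∀ γ, γ ∉ S → e a γ = 0}
    have hHfin : Hset.Finite := by
      have h1 : {x : Γ →₀ A₀ | ∀ γ, γ ∉ S → x γ = 0}.Finite := by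
        apply Set.Finite.of_finite_image (f := fun (x : Γ →₀ A₀) (γ : {γ : Γ // γ ∈ S}) => x γ)
        · exact Set.Finite.subset Set.finite_univ (Set.subset_univ _)
        · intro x hx y hy hxy
          ext γ
          by_cases hγ : γ ∈ S
          · exact congrFun hxy ⟨γ, hγ⟩
          · rw [hx γ hγ, hy γ hγ]
      exact h1.preimage e.injective.injOn
    let Hfin : Finset A := hHfin.toFinset
    have hmemH : ∀ a : A, a ∈ Hfin ↔ ∀ γ, γ ∉ S → e a γ = 0 := fun a => hHfin.mem_toFinset
    have h0H : (0 : A) ∈ Hfin := (hmemH 0).mpr (fun γ _ => by simp)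
    have haddH : ∀ a ∈ Hfin, ∀ b ∈ Hfin, a + b ∈ Hfin := by
      intro a ha b hb
      rw [hmemH] at ha hb ⊢
      intro γ hγ
      rw [map_add, Finsupp.add_apply, ha γ hγ, hb γ hγ, add_zero]
    have hnegH : ∀ a ∈ Hfin, -a ∈ Hfin := by
      intro a ha
      rw [hmemH] at ha ⊢
      intro γ hγ
      rw [map_neg, Finsupp.neg_apply, ha γ hγ, neg_zero]
    have hFH : ∀ i ∈ t, ∀ g ∈ F i, Multiplicative.toAdd g ∈ Hfin := by
      intro i hi g hg
      rw [hmemH]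
      intro γ hγ
      by_contra hne
      exact hγ (Finset.mem_biUnion.mpr ⟨i, hi, Finset.mem_biUnion.mpr
        ⟨g, hg, Finsupp.mem_support_iff.mpr hne⟩⟩)
    -- invariance of U under agreement on Hfin
    have hinv : ∀ χ' ∈ U, ∀ η : PontryaginDual G,
        (∀ a ∈ Hfin, η (ofAdd a) = χ' (ofAdd a)) → η ∈ U := by
      intro χ' hχ' η hη
      obtain ⟨i, hi, hmem⟩ := Set.mem_iUnion₂.mp (ht hχ')
      apply hF i
      intro g hg
      have h1 := hη _ (hFH i hi g hg)
      rw [ofAdd_toAdd] at h1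
      refine h1.trans ?_
      exact hmem g hg
    -- the restriction map
    let r : PontryaginDual G → (A → Circle) := fun χ a =>
      if a ∈ Hfin then χ (ofAdd a) else 1
    have hragree : ∀ χ η : PontryaginDual G,
        r χ = r η ↔ ∀ a ∈ Hfin, χ (ofAdd a) = η (ofAdd a) := by
      intro χ η
      constructor
      · intro h a ha
        have := congrFun h a
        rwa [show r χ a = χ (ofAdd a) from if_pos ha,
          show r η a = η (ofAdd a) from if_pos ha] at this
      · intro h
        funext a
        by_cases ha : a ∈ Hfin
        · rw [show r χ a = χ (ofAdd a) from if_pos ha,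
            show r η a = η (ofAdd a) from if_pos ha]
          exact h a ha
        · rw [show r χ a = 1 from if_neg ha, show r η a = 1 from if_neg ha]
    have hrfin : (r '' U).Finite := by
      have hWfin : {f : A → Circle | (∀ a, f a ^ N = 1) ∧ ∀ a, a ∉ Hfin → f a = 1}.Finite := by
        apply Set.Finite.of_finite_image (f := fun (f : A → Circle) (a : {a : A // a ∈ Hfin}) => f a)
        · refine Set.Finite.subset (Set.Finite.pi (fun _ : {a : A // a ∈ Hfin} =>
            finite_roots N hN)) ?_
          rintro _ ⟨f, hf, rfl⟩
          exact fun i _ => hf.1 i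
        · intro x hx y hy hxy
          funext a
          by_cases ha : a ∈ Hfin
          · exact congrFun hxy ⟨a, ha⟩
          · rw [hx.2 a ha, hy.2 a ha]
      refine hWfin.subset ?_
      rintro _ ⟨χ, hχ, rfl⟩
      constructor
      · intro a
        by_cases ha : a ∈ Hfin
        · rw [show r χ a = χ (ofAdd a) from if_pos ha]
          exact htors χ (ofAdd a)
        · rw [show r χ a = 1 from if_neg ha, one_pow]
      · intro a ha
        exact if_neg ha
    let Tfin : Finset (A → Circle) := hrfin.toFinset
    have hr_eqU : ∀ χ : PontryaginDual G, χ ∈ U ↔ r χ ∈ Tfin := by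
      intro χ
      constructor
      · intro h
        exact hrfin.mem_toFinset.mpr ⟨χ, h, rfl⟩
      · intro h
        obtain ⟨χ'', hχ'', heq⟩ := hrfin.mem_toFinset.mp h
        exact hinv χ'' hχ'' χ ((hragree χ χ'').mp heq.symm)
    have hwit : ∀ φ ∈ Tfin, ∃ χ'' : PontryaginDual G, χ'' ∈ U ∧ r χ'' = φ := by
      intro φ hφ
      obtain ⟨χ'', h1, h2⟩ := hrfin.mem_toFinset.mp hφ
      exact ⟨χ'', h1, h2⟩
    choose w hwU hwr using hwit
    have hn : 0 < Hfin.card := Finset.card_pos.mpr ⟨0, h0H⟩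
    have hnne : (Hfin.card : ℂ) ≠ 0 := Nat.cast_ne_zero.mpr hn.ne'
    -- the key identity
    have key : f = ∑ φ ∈ Tfin.attach, ((Hfin.card : ℂ))⁻¹ •
        ∑ a ∈ Hfin, (((w φ.1 φ.2 (ofAdd a))⁻¹ : Circle) : ℂ) • ev a := by
      ext χ
      rw [hfU, ContinuousMap.sum_apply]
      have hterm : ∀ φ : {x // x ∈ Tfin},
          (((Hfin.card : ℂ))⁻¹ • ∑ a ∈ Hfin, (((w φ.1 φ.2 (ofAdd a))⁻¹ : Circle) : ℂ) • ev a) χ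
            = if r χ = φ.1 then (1 : ℂ) else 0 := by
        intro φ
        rw [ContinuousMap.smul_apply, ContinuousMap.sum_apply]
        have h2 : ∀ a ∈ Hfin, ((((w φ.1 φ.2 (ofAdd a))⁻¹ : Circle) : ℂ) • ev a) χ
            = (((w φ.1 φ.2 (ofAdd a))⁻¹ * χ (ofAdd a) : Circle) : ℂ) := by
          intro a _
          rw [ContinuousMap.smul_apply]
          show (((w φ.1 φ.2 (ofAdd a))⁻¹ : Circle) : ℂ) • ((χ (ofAdd a) : Circle) : ℂ) = _
          rw [smul_eq_mul, Circle.coe_mul]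
        rw [Finset.sum_congr rfl h2]
        erw [orthogonality Hfin haddH hnegH (w φ.1 φ.2) χ]
        have hcond : (∀ a ∈ Hfin, χ (ofAdd a) = w φ.1 φ.2 (ofAdd a)) ↔ r χ = φ.1 := by
          rw [← hragree χ (w φ.1 φ.2)]
          exact ⟨fun h => h.trans (hwr φ.1 φ.2), fun h => h.trans (hwr φ.1 φ.2).symm⟩
        by_cases hc : r χ = φ.1
        · erw [if_pos (hcond.mpr hc), if_pos hc, smul_eq_mul, inv_mul_cancel₀ hnne]
        · erw [if_neg (fun hh => hc (hcond.mp hh)), if_neg hc, smul_zero]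
      rw [Finset.sum_congr rfl (fun φ _ => hterm φ)]
      rw [Finset.sum_attach Tfin (fun φ => if r χ = φ then (1:ℂ) else 0)]
      rw [Finset.sum_ite_eq Tfin (r χ) (fun _ => (1:ℂ))]
      rw [Set.indicator_apply]
      by_cases hc : χ ∈ U
      · rw [if_pos hc, if_pos ((hr_eqU χ).mp hc)]
      · rw [if_neg hc, if_neg (fun hh => hc ((hr_eqU χ).mpr hh))]
    rw [key]
    refine Submodule.sum_mem _ fun φ _ => Submodule.smul_mem _ _
      (Submodule.sum_mem _ fun a _ => Submodule.smul_mem _ _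
        (Submodule.subset_span ⟨a, fun χ => rfl⟩))
end

section
/- Let Γ be a countable group acting measurably and measure-preservingly on a standard probability space (X, μ), and let F : X × Γ → ℂ be a measurable function for which there exists C ∈ ℕ such that for μ-almost every x ∈ X the set {γ ∈ Γ : F(x, γ) ≠ 0} has at most C elements. Then for every ε > 0 there exist a Borel set Y ⊆ X with μ(Y) ≥ 1 − ε and D ∈ ℕ such that for every y ∈ X the set {γ ∈ Γ : γ·y ∈ Y and F(γ·y, γ) ≠ 0} has at most D elements. -/
open MeasureTheory

/-- Let a countable group `Γ` act measurably and measure-preservingly on a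
standard probability space `(X, μ)`, and let `F : X × Γ → ℂ` (written here as
`F : X → Γ → ℂ`) have uniformly a.e. bounded "target fibers": for some `C ∈ ℕ`, for a.e.
`x` the set `{γ | F x γ ≠ 0}` has at most `C` elements.  Then for every `ε > 0` there are a
Borel set `Y ⊆ X` with `μ Y ≥ 1 - ε` and `D ∈ ℕ` such that for every `y ∈ X` the "source
fiber" `{γ | γ • y ∈ Y ∧ F (γ • y) γ ≠ 0}` has at most `D` elements. -/
theorem cutdown_of_target_bounded_is_source_bounded
    {X : Type} [MeasurableSpace X] [StandardBorelSpace X]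
    (μ : Measure X) [IsProbabilityMeasure μ]
    (Γ : Type) [Group Γ] [Countable Γ] [MulAction Γ X]
    (hact_meas : ∀ γ : Γ, Measurable fun x : X => γ • x)
    (hact_mp : ∀ γ : Γ, MeasurePreserving (fun x : X => γ • x) μ μ)
    (F : X → Γ → ℂ)
    (hFmeas : ∀ γ : Γ, Measurable fun x : X => F x γ)
    (C : ℕ) (hC : ∀ᵐ x ∂μ, Set.encard {γ : Γ | F x γ ≠ 0} ≤ C)
    (ε : ℝ) (hε : 0 < ε) :
    ∃ Y : Set X, MeasurableSet Y ∧ 1 - ε ≤ (μ Y).toReal ∧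
      ∃ D : ℕ, ∀ y : X, Set.encard {γ : Γ | γ • y ∈ Y ∧ F (γ • y) γ ≠ 0} ≤ D := by
  classical
  obtain ⟨e, he⟩ := exists_surjective_nat Γ
  set g := Function.surjInv he with hg
  have hge : ∀ γ, e (g γ) = γ := Function.surjInv_eq he
  set A : ℕ → Set X := fun n => ⋂ (γ : Γ) (_ : γ ∉ e '' Set.Iio n),
      (fun x => F x γ) ⁻¹' {0} with hA
  have hAmeas : ∀ n, MeasurableSet (A n) := fun n =>
    MeasurableSet.iInter fun γ => MeasurableSet.iInter fun _ =>
      (hFmeas γ) (measurableSet_singleton 0)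
  have hmono : Monotone A := by
    intro n m hnm x hx
    simp only [hA, Set.mem_iInter] at hx ⊢
    intro γ hγ
    exact hx γ fun h => hγ (Set.image_mono (f := e) (Set.Iio_subset_Iio hnm) h)
  have hcover : ∀ᵐ x ∂μ, x ∈ ⋃ n, A n := by
    filter_upwards [hC] with x hx
    have hfin : {γ : Γ | F x γ ≠ 0}.Finite :=
      Set.encard_lt_top_iff.mp (hx.trans_lt (by simp))
    refine Set.mem_iUnion.2 ⟨hfin.toFinset.sup g + 1, ?_⟩
    simp only [hA, Set.mem_iInter]
    intro γ hγ
    by_contra h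
    exact hγ ⟨g γ, Nat.lt_succ_of_le (Finset.le_sup (hfin.mem_toFinset.2 h)), hge γ⟩
  have h1 : μ (⋃ n, A n) = 1 := by
    have heq : (⋃ n, A n) =ᵐ[μ] Set.univ := by
      rw [Filter.eventuallyEq_set]
      filter_upwards [hcover] with x hx
      simp [hx]
    rw [measure_congr heq, measure_univ]
  have htend : Filter.Tendsto (fun n => μ (A n)) Filter.atTop (nhds 1) := by
    have := tendsto_measure_iUnion_atTop (μ := μ) hmono
    rwa [h1] at this
  have htend2 : Filter.Tendsto (fun n => (μ (A n)).toReal) Filter.atTop (nhds 1) := by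
    have h := (ENNReal.tendsto_toReal (by norm_num : (1 : ENNReal) ≠ ⊤)).comp htend
    simpa [Function.comp_def] using h
  obtain ⟨n, hn⟩ := (htend2.eventually (eventually_gt_nhds (by linarith : 1 - ε < 1))).exists
  refine ⟨A n, hAmeas n, hn.le, n, fun y => ?_⟩
  have hsub : {γ : Γ | γ • y ∈ A n ∧ F (γ • y) γ ≠ 0} ⊆
      ↑(Finset.image e (Finset.range n)) := by
    rintro γ ⟨h1', h2'⟩
    simp only [hA, Set.mem_iInter] at h1'
    by_contra hmem
    refine h2' (h1' γ ?_)
    rintro ⟨k, hk, hek⟩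
    refine hmem ?_
    simp only [Finset.coe_image, Set.mem_image, Finset.coe_range]
    exact ⟨k, hk, hek⟩
  calc Set.encard {γ : Γ | γ • y ∈ A n ∧ F (γ • y) γ ≠ 0}
      ≤ Set.encard ↑(Finset.image e (Finset.range n)) := Set.encard_mono hsub
    _ = (Finset.image e (Finset.range n)).card := Set.encard_coe_eq_coe_finsetCard _
    _ ≤ (n : ℕ∞) := by
        exact_mod_cast (Finset.card_image_le.trans (le_of_eq (Finset.card_range n)))
end
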